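/- There is a one-to-one correspondence between eigenpairs of the modified Maxwell's Stekloff eigenvalue problem and those of the Neumann-to-Dirichlet operator T: if (λ,u) satisfies a(u,v) = −λ⟨S u_T, v_T⟩ for all v ∈ H(curl;Ω) with u nontrivial, then (−1/λ, S u_T) is an eigenpair of T; conversely if (μ,g) is an eigenpair of T with μ ≠ 0 and w solves the source problem with data g, then (−1/μ, w) is an eigenpair of the Stekloff problem. Consequently, since T is compact and self-adjoint, the Stekloff eigenvalues form a discrete set. -/

import Mathlib

section AUXSEC

open scoped InnerProductSpace ComplexConjugate

section Aux
variable {E : Type} [NormedAddCommGroup E] [InnerProductSpace ℂ E]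

lemma aux_eig_conj (T : E →L[ℂ] E)
    (hsa : ∀ f g : E, (inner ℂ (T f) g : ℂ) = inner ℂ f (T g))
    {μ : ℂ} {g : E} (hg : g ≠ 0) (h : T g = μ • g) :
    conj μ = μ := by
  have key := hsa g g
  rw [h, inner_smul_left, inner_smul_right] at key
  have hgg : (inner ℂ g g : ℂ) ≠ 0 := inner_self_ne_zero.mpr hg
  exact mul_right_cancel₀ hgg key

lemma aux_eig_orth (T : E →L[ℂ] E)
    (hsa : ∀ f g : E, (inner ℂ (T f) g : ℂ) = inner ℂ f (T g))
    {μ ν : ℂ} {g h : E} (hg : g ≠ 0) (hh : h ≠ 0)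
    (hTg : T g = μ • g) (hTh : T h = ν • h) (hne : μ ≠ ν) :
    (inner ℂ g h : ℂ) = 0 := by
  have key := hsa g h
  rw [hTg, hTh, inner_smul_left, inner_smul_right,
    aux_eig_conj T hsa hg hTg] at key
  have : (μ - ν) * (inner ℂ g h : ℂ) = 0 := by ring_nf; linear_combination key
  rcases mul_eq_zero.mp this with h1 | h1
  · exact absurd (sub_eq_zero.mp h1) hne
  · exact h1

lemma aux_eig_finite (T : E →L[ℂ] E)
    (hc : IsCompactOperator (⇑T))
    (hsa : ∀ f g : E, (inner ℂ (T f) g : ℂ) = inner ℂ f (T g))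
    {ε : ℝ} (hε : 0 < ε) :
    {μ : ℂ | ε ≤ ‖μ‖ ∧ ∃ g : E, g ≠ 0 ∧ T g = μ • g}.Finite := by
  by_contra hfin
  have hinf : {μ : ℂ | ε ≤ ‖μ‖ ∧ ∃ g : E, g ≠ 0 ∧ T g = μ • g}.Infinite := hfin
  set f := hinf.natEmbedding with hf
  set μ : ℕ → ℂ := fun n => (f n : ℂ) with hμ
  have hμinj : Function.Injective μ := fun n m h =>
    f.injective (Subtype.coe_injective h)
  have hμε : ∀ n, ε ≤ ‖μ n‖ := fun n => (f n).2.1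
  choose g hg0 hgT using fun n => (f n).2.2
  set u : ℕ → E := fun n => (‖g n‖ : ℂ)⁻¹ • g n with hu
  have hun : ∀ n, ‖u n‖ = 1 := by
    intro n
    rw [hu]
    simp only [norm_smul, norm_inv, Complex.norm_real, Real.norm_eq_abs,
      abs_norm]
    field_simp [norm_ne_zero_iff.mpr (hg0 n)]
  have hu0 : ∀ n, u n ≠ 0 := fun n => by
    intro h; have := hun n; rw [h, norm_zero] at this; norm_num at this
  have hTu : ∀ n, T (u n) = μ n • u n := by
    intro n
    show T ((‖g n‖ : ℂ)⁻¹ • g n) = μ n • (‖g n‖ : ℂ)⁻¹ • g n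
    rw [map_smul, hgT n, smul_comm]
  have horth : ∀ n m, n ≠ m → (inner ℂ (u n) (u m) : ℂ) = 0 := by
    intro n m hnm
    exact aux_eig_orth T hsa (hu0 n) (hu0 m) (hTu n) (hTu m)
      (fun h => hnm (hμinj h))
  have hsep : ∀ n m, n ≠ m → ε ≤ ‖T (u n) - T (u m)‖ := by
    intro n m hnm
    have hsq : ‖T (u n) - T (u m)‖ ^ 2 = ‖μ n‖ ^ 2 + ‖μ m‖ ^ 2 := by
      rw [hTu n, hTu m, @norm_sub_sq ℂ]
      rw [inner_smul_left, inner_smul_right, horth n m hnm]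
      simp [norm_smul, hun]
    nlinarith [hμε n, hμε m, norm_nonneg (T (u n) - T (u m)),
      norm_nonneg (μ n), norm_nonneg (μ m), hε]
  obtain ⟨K, hK, hmem⟩ := hc
  rw [Metric.mem_nhds_iff] at hmem
  obtain ⟨r, hr, hball⟩ := hmem
  set x : ℕ → E := fun n => ((r / 2 : ℝ) : ℂ) • u n with hx
  have hxK : ∀ n, T (x n) ∈ K := by
    intro n
    apply hball
    rw [Metric.mem_ball, dist_zero_right, hx, norm_smul, hun]
    simp only [Complex.norm_real, Real.norm_eq_abs, mul_one]
    rw [abs_of_pos (by linarith)]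
    linarith
  obtain ⟨a, -, φ, hφ, hconv⟩ := hK.tendsto_subseq hxK
  rw [Metric.tendsto_atTop] at hconv
  obtain ⟨N, hN⟩ := hconv (r * ε / 8) (by positivity)
  have h1 := hN N le_rfl
  have h2 := hN (N + 1) (by omega)
  have hne : φ N ≠ φ (N + 1) := fun h => by
    have := hφ.injective h; omega
  have hdist : dist (T (x (φ N))) (T (x (φ (N + 1)))) ≥ r / 2 * ε := by
    have hTx : ∀ n, T (x n) = ((r / 2 : ℝ) : ℂ) • T (u n) := fun n => map_smul T _ _
    rw [dist_eq_norm, hTx, hTx, ← smul_sub, norm_smul]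
    simp only [Complex.norm_real, Real.norm_eq_abs]
    rw [abs_of_pos (by linarith)]
    have := hsep (φ N) (φ (N + 1)) hne
    have h2r : (0:ℝ) < r / 2 := by linarith
    calc r / 2 * ε ≤ r / 2 * ‖T (u (φ N)) - T (u (φ (N + 1)))‖ := by
          exact mul_le_mul_of_nonneg_left this (le_of_lt h2r)
      _ = _ := rfl
  have := dist_triangle (T (x (φ N))) a (T (x (φ (N + 1))))
  rw [dist_comm (T (x (φ N))) a] at this
  have : dist (T (x (φ N))) (T (x (φ (N + 1)))) < r * ε / 4 := by
    calc dist (T (x (φ N))) (T (x (φ (N + 1))))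
        ≤ dist (T (x (φ N))) a + dist a (T (x (φ (N + 1)))) :=
          dist_triangle _ _ _
      _ < r * ε / 8 + r * ε / 8 := by
          rw [dist_comm a]; exact add_lt_add h1 h2
      _ = r * ε / 4 := by ring
  nlinarith [hdist, mul_pos hr hε]

end Aux
end AUXSEC


/-!
Statement 13: one-to-one correspondence between eigenpairs of the modified
Maxwell Stekloff problem `a(u,v) = −λ⟨S u_T, v_T⟩` and eigenpairs of the
Neumann-to-Dirichlet operator `T`; discreteness of the Stekloff spectrum.

Abstract setting as in Statement 12: `V ≃ H(curl;Ω)`, `L ≃ L²(Ω)³`,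
`Bt ≃ L²_t(Γ)` with `D = H(div⁰_Γ;Γ)`, `G ≃ H¹(Γ)`, `curlΓ` the surface
vector curl, `traceT u = u_T`, `⟨f, v_T⟩ = ⟪v_T, f⟫_{L²(Γ)}`.
-/

noncomputable section

/-- `a(u,v) = (curl u, curl v) − κ²(ε_r u, v)`. -/
def aForm {V L : Type}
    [NormedAddCommGroup V] [InnerProductSpace ℂ V]
    [NormedAddCommGroup L] [InnerProductSpace ℂ L]
    (κ : ℝ) (curl ι : V →L[ℂ] L) (eps : L →L[ℂ] L) (u v : V) : ℂ :=
  inner ℂ (curl v) (curl u) - (κ : ℂ) ^ 2 * inner ℂ (ι v) (eps (ι u))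

/-- Stekloff eigenpairs correspond to eigenpairs of `T`
via `λ ↦ −1/λ`, and the Stekloff eigenvalues form a discrete set. -/
theorem stekloff_T_eigenpair_correspondence
    {V L G Bt : Type}
    [NormedAddCommGroup V] [InnerProductSpace ℂ V] [CompleteSpace V]
    [NormedAddCommGroup L] [InnerProductSpace ℂ L]
    [NormedAddCommGroup G] [NormedSpace ℂ G]
    [NormedAddCommGroup Bt] [InnerProductSpace ℂ Bt]
    (κ : ℝ) (hκ : 0 < κ)
    (ι curl : V →L[ℂ] L) (eps : L →L[ℂ] L)
    (α : ℝ) (hα : 0 < α)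
    (hcoer : ∀ w : L, α * ‖w‖ ^ 2 ≤ (inner ℂ w (eps w) : ℂ).re)
    (hNeumann : ∀ u : V, (∀ v : V, aForm κ curl ι eps u v = 0) → u = 0)
    (traceT : V → Bt) (D : Submodule ℂ Bt)
    (curlΓ : G →L[ℂ] Bt)
    (S : Bt →L[ℂ] Bt) (hSrange : ∀ μ : Bt, S μ ∈ D)
    (hS : ∀ μ : Bt, ∃ q : G, S μ = curlΓ q ∧
      ∀ ψ : G, (inner ℂ (curlΓ ψ) (curlΓ q) : ℂ) = inner ℂ (curlΓ ψ) μ)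
    -- unique solvability of the source problem:
    (hsource : ∀ f : D, ∃! u : V,
      ∀ v : V, aForm κ curl ι eps u v = inner ℂ (traceT v) (f : Bt))
    -- `T f = S u_T`, compact and self-adjoint (Lemma 4.1):
    (T : D →L[ℂ] D)
    (hT : ∀ f : D, ∀ u : V,
      (∀ v : V, aForm κ curl ι eps u v = inner ℂ (traceT v) (f : Bt)) →
      (T f : Bt) = S (traceT u))
    (hTcompact : IsCompactOperator (⇑T))
    (hTselfadj : ∀ f g : D, (inner ℂ ((T f : Bt)) ((g : Bt)) : ℂ)
      = inner ℂ ((f : Bt)) ((T g : Bt))) :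
    -- (1) a Stekloff eigenpair `(λ,u)` yields the eigenpair `(−1/λ, S u_T)` of `T`:
    (∀ (lam : ℂ) (u : V), u ≠ 0 →
      (∀ v : V, aForm κ curl ι eps u v
        = -lam * (inner ℂ (traceT v) (S (traceT u)) : ℂ)) →
      ∀ su : D, (su : Bt) = S (traceT u) →
        su ≠ 0 ∧ T su = (-1 / lam) • su) ∧
    -- (2) an eigenpair `(μ,g)` of `T` with `μ ≠ 0` yields the Stekloff
    --     eigenpair `(−1/μ, w)`, `w` the source solution with data `g`:
    (∀ (μ : ℂ) (g : D), μ ≠ 0 → g ≠ 0 → T g = μ • g →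
      ∀ w : V,
        (∀ v : V, aForm κ curl ι eps w v = inner ℂ (traceT v) (g : Bt)) →
        w ≠ 0 ∧
        ∀ v : V, aForm κ curl ι eps w v
          = -(-1 / μ) * (inner ℂ (traceT v) (S (traceT w)) : ℂ)) ∧
    -- (3) consequently the Stekloff eigenvalues form a discrete set:
    (Set.Countable {lam : ℂ | ∃ u : V, u ≠ 0 ∧
        ∀ v : V, aForm κ curl ι eps u v
          = -lam * (inner ℂ (traceT v) (S (traceT u)) : ℂ)} ∧
      ∀ lam ∈ {lam : ℂ | ∃ u : V, u ≠ 0 ∧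
        ∀ v : V, aForm κ curl ι eps u v
          = -lam * (inner ℂ (traceT v) (S (traceT u)) : ℂ)},
        ∃ ε : ℝ, 0 < ε ∧
          ∀ lam' ∈ {lam : ℂ | ∃ u : V, u ≠ 0 ∧
            ∀ v : V, aForm κ curl ι eps u v
              = -lam * (inner ℂ (traceT v) (S (traceT u)) : ℂ)},
            lam' ≠ lam → ε ≤ dist lam lam') := by
  -- aForm of 0 is 0
  have haz : ∀ v : V, aForm κ curl ι eps (0 : V) v = 0 := by
    intro v; simp [aForm]
  -- Part 1 as a reusable fact
  have part1 : ∀ (lam : ℂ) (u : V), u ≠ 0 →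
      (∀ v : V, aForm κ curl ι eps u v
        = -lam * (inner ℂ (traceT v) (S (traceT u)) : ℂ)) →
      ∀ su : D, (su : Bt) = S (traceT u) →
        lam ≠ 0 ∧ su ≠ 0 ∧ T su = (-1 / lam) • su := by
    intro lam u hu heig su hsu
    have hlam : lam ≠ 0 := by
      intro h
      apply hu
      apply hNeumann
      intro v
      rw [heig v, h]; ring
    have hsu0 : su ≠ 0 := by
      intro h
      apply hu
      apply hNeumann
      intro v
      have : S (traceT u) = 0 := by rw [← hsu, h]; simp
      rw [heig v, this, inner_zero_right]; ring
    refine ⟨hlam, hsu0, ?_⟩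
    have hsol : ∀ v : V, aForm κ curl ι eps u v
        = inner ℂ (traceT v) (((-lam) • su : D) : Bt) := by
      intro v
      rw [Submodule.coe_smul, inner_smul_right, hsu, heig v]
    have hTeq := hT ((-lam) • su) u hsol
    rw [map_smul] at hTeq
    have hco : (((-lam) • T su : D) : Bt) = (su : Bt) := by
      rw [hTeq, hsu]
    have hDeq : (-lam) • T su = su := Subtype.coe_injective hco
    have := congrArg (fun z : D => (-lam)⁻¹ • z) hDeq
    simp only [smul_smul] at this
    rw [inv_mul_cancel₀ (neg_ne_zero.mpr hlam), one_smul] at this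
    rw [this]
    congr 1
    field_simp
  -- `S (traceT 0) = 0`
  have hS0 : S (traceT (0 : V)) = 0 := by
    have h0 : ∀ v : V, aForm κ curl ι eps (0 : V) v
        = inner ℂ (traceT v) (((0 : D) : Bt)) := by
      intro v; rw [haz v]; simp
    have := hT 0 0 h0
    rw [map_zero] at this
    simpa using this.symm
  refine ⟨?_, ?_, ?_⟩
  · -- Part 1
    intro lam u hu heig su hsu
    exact (part1 lam u hu heig su hsu).2
  · -- Part 2
    intro μ g hμ hg hTg w hw
    have hwne : w ≠ 0 := by
      intro h
      subst h
      have h1 := hT g 0 hw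
      rw [hS0, hTg] at h1
      have : (μ • g : D) = 0 := Subtype.coe_injective (by show ((μ • g : D) : Bt) = ((0 : D) : Bt); rw [h1]; simp)
      exact hg (by simpa [smul_eq_zero, hμ] using this)
    refine ⟨hwne, ?_⟩
    have h1 := hT g w hw
    rw [hTg, Submodule.coe_smul] at h1
    intro v
    rw [← h1, inner_smul_right, hw v]
    field_simp
  · have hsa : ∀ f g : D, (inner ℂ (T f) g : ℂ) = inner ℂ f (T g) := by
      intro f g
      rw [Submodule.coe_inner, Submodule.coe_inner]
      exact hTselfadj f g
    have hkey : ∀ lam : ℂ, (∃ u : V, u ≠ 0 ∧ ∀ v : V, aForm κ curl ι eps u v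
          = -lam * (inner ℂ (traceT v) (S (traceT u)) : ℂ)) →
        lam ≠ 0 ∧ ∃ g : D, g ≠ 0 ∧ T g = (-1 / lam) • g := by
      rintro lam ⟨u, hu, heig⟩
      obtain ⟨hlam, hsu0, hTsu⟩ :=
        part1 lam u hu heig ⟨S (traceT u), hSrange _⟩ rfl
      exact ⟨hlam, ⟨S (traceT u), hSrange _⟩, hsu0, hTsu⟩
    have hfin : ∀ ε : ℝ, 0 < ε →
        {μ : ℂ | ε ≤ ‖μ‖ ∧ ∃ g : D, g ≠ 0 ∧ T g = μ • g}.Finite :=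
      fun ε hε => aux_eig_finite T hTcompact hsa hε
    have hinv : ∀ lam : ℂ, lam ≠ 0 → -1 / (-1 / lam) = lam := by
      intro lam h; field_simp
    constructor
    · -- countable
      have hsub : {lam : ℂ | ∃ u : V, u ≠ 0 ∧ ∀ v : V, aForm κ curl ι eps u v
            = -lam * (inner ℂ (traceT v) (S (traceT u)) : ℂ)}
          ⊆ ⋃ n : ℕ, (fun μ : ℂ => -1 / μ) ''
            {μ : ℂ | 1 / ((n : ℝ) + 1) ≤ ‖μ‖ ∧ ∃ g : D, g ≠ 0 ∧ T g = μ • g} := by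
        intro lam hlam
        obtain ⟨hlam0, g, hg, hTg⟩ := hkey lam hlam
        have hn0 : (-1 / lam : ℂ) ≠ 0 := by
          simp [div_eq_zero_iff, hlam0]
        have hnorm : 0 < ‖(-1 / lam : ℂ)‖ := norm_pos_iff.mpr hn0
        obtain ⟨n, hn⟩ := exists_nat_one_div_lt hnorm
        exact Set.mem_iUnion.mpr ⟨n, ⟨-1 / lam, ⟨le_of_lt hn, g, hg, hTg⟩,
          hinv lam hlam0⟩⟩
      exact Set.Countable.mono hsub (Set.countable_iUnion fun n =>
        ((hfin _ (by positivity)).image _).countable)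
    · -- isolation
      intro lam hlam
      obtain ⟨hlam0, -⟩ := hkey lam hlam
      have hnl : 0 < ‖lam‖ := norm_pos_iff.mpr hlam0
      have hε₀ : 0 < 1 / (2 * ‖lam‖) := by positivity
      have hF : {μ : ℂ | 1 / (2 * ‖lam‖) ≤ ‖μ‖ ∧
          ∃ g : D, g ≠ 0 ∧ T g = μ • g}.Finite := hfin _ hε₀
      set Gs : Set ℂ := (((fun μ : ℂ => -1 / μ) ''
          {μ : ℂ | 1 / (2 * ‖lam‖) ≤ ‖μ‖ ∧ ∃ g : D, g ≠ 0 ∧ T g = μ • g})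
          \ {lam}) ∪ {lam + (‖lam‖ : ℂ)} with hGs
      have hGfin : Gs.Finite := ((hF.image _).diff).union (Set.finite_singleton _)
      have hGne : Gs.Nonempty := ⟨lam + (‖lam‖ : ℂ),
        Set.mem_union_right _ (Set.mem_singleton _)⟩
      have hGnm : lam ∉ Gs := by
        rintro (⟨-, h⟩ | h)
        · exact h rfl
        · have h2 := Set.mem_singleton_iff.mp h
          have h3 : ((‖lam‖ : ℝ) : ℂ) = 0 := by linear_combination -h2
          rw [Complex.ofReal_eq_zero] at h3
          exact absurd h3 (ne_of_gt hnl)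
      have hpos : 0 < Metric.infDist lam Gs :=
        ((hGfin.isClosed).notMem_iff_infDist_pos hGne).mp hGnm
      refine ⟨Metric.infDist lam Gs, hpos, ?_⟩
      intro lam' hlam' hne
      obtain ⟨hl0', g, hg, hTg⟩ := hkey lam' hlam'
      by_cases hcase : 1 / (2 * ‖lam‖) ≤ ‖(-1 / lam' : ℂ)‖
      · have hmem : lam' ∈ Gs := by
          apply Set.mem_union_left
          exact ⟨⟨-1 / lam', ⟨hcase, g, hg, hTg⟩, hinv lam' hl0'⟩,
            by simpa using hne⟩
        exact Metric.infDist_le_dist_of_mem hmem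
      · push_neg at hcase
        have h1 : ‖(-1 / lam' : ℂ)‖ = 1 / ‖lam'‖ := by
          rw [norm_div, norm_neg, norm_one]
        have hnl' : 0 < ‖lam'‖ := norm_pos_iff.mpr hl0'
        rw [h1] at hcase
        have h2 : 2 * ‖lam‖ < ‖lam'‖ :=
          lt_of_one_div_lt_one_div hnl' hcase
        have h3 : Metric.infDist lam Gs ≤ ‖lam‖ := by
          have hm : lam + (‖lam‖ : ℂ) ∈ Gs :=
            Set.mem_union_right _ (Set.mem_singleton _)
          have h3' := Metric.infDist_le_dist_of_mem (x := lam) hm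
          simpa [dist_self_add_right, Complex.norm_real] using h3'
        have h4 : ‖lam‖ ≤ dist lam lam' := by
          rw [dist_eq_norm]
          have h5 : ‖lam'‖ - ‖lam‖ ≤ ‖lam' - lam‖ := norm_sub_norm_le _ _
          rw [norm_sub_rev] at h5
          linarith
        linarith
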